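/- Let X and Y be real Banach spaces and let J : X → Y be a bounded linear operator with ‖J‖ ≤ 1. Then J is an isometric embedding (‖Jx‖ = ‖x‖ for all x ∈ X) if and only if Ext(B_{X*}) ⊆ J*(Ext(B_{Y*})), where J* : Y* → X* is the adjoint operator. -/

import Mathlib

open Set Metric NormedSpace

set_option maxHeartbeats 2000000 in
/-- Let `J : X → Y` be a bounded linear operator with `‖J‖ ≤ 1` between
real Banach spaces. Then `J` is an isometric embedding iff
`Ext(B_{X*}) ⊆ J*(Ext(B_{Y*}))`, where `J*` is the adjoint operator. -/
theorem isometric_embedding_iff_extreme_points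
    {X Y : Type*} [NormedAddCommGroup X] [NormedSpace ℝ X] [CompleteSpace X]
    [NormedAddCommGroup Y] [NormedSpace ℝ Y] [CompleteSpace Y]
    (J : X →L[ℝ] Y) (hJ : ‖J‖ ≤ 1) :
    (∀ x : X, ‖J x‖ = ‖x‖) ↔
      Set.extremePoints ℝ (Metric.closedBall (0 : StrongDual ℝ X) 1) ⊆
        (fun ψ : StrongDual ℝ Y => (ψ.comp J : StrongDual ℝ X)) ''
          Set.extremePoints ℝ (Metric.closedBall (0 : StrongDual ℝ Y) 1) := by
  classical
  haveI : LocallyConvexSpace ℝ (WeakDual ℝ X) := WeakBilin.locallyConvexSpace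
  haveI : LocallyConvexSpace ℝ (WeakDual ℝ Y) := WeakBilin.locallyConvexSpace
  have hcompmem : ∀ χ : StrongDual ℝ Y, ‖χ‖ ≤ 1 → χ.comp J ∈ closedBall (0 : StrongDual ℝ X) 1 := by
    intro χ hχ
    rw [mem_closedBall_zero_iff]
    calc ‖χ.comp J‖ ≤ ‖χ‖ * ‖J‖ := ContinuousLinearMap.opNorm_comp_le _ _
      _ ≤ 1 * 1 := mul_le_mul hχ hJ (norm_nonneg _) zero_le_one
      _ = 1 := one_mul 1
  constructor
  · -- forward direction: isometry ⇒ extreme points lift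
    intro hiso φ hφmem
    rw [mem_extremePoints] at hφmem
    obtain ⟨hφB, hφext⟩ := hφmem
    have hφnorm : ‖φ‖ ≤ 1 := by rwa [mem_closedBall_zero_iff] at hφB
    -- extend φ ∘ J⁻¹ from range J to all of Y by Hahn-Banach
    let Ji : X →ₗᵢ[ℝ] Y := ⟨(J : X →ₗ[ℝ] Y), hiso⟩
    let e := Ji.equivRange
    let p : Submodule ℝ Y := LinearMap.range Ji.toLinearMap
    let f : p →L[ℝ] ℝ := φ.comp (e.symm.toContinuousLinearEquiv : p →L[ℝ] X)
    obtain ⟨g, hg_ext, hg_norm⟩ := exists_extension_norm_eq p f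
    have hf_le : ‖f‖ ≤ 1 := by
      refine ContinuousLinearMap.opNorm_le_bound _ zero_le_one fun y => ?_
      have h0 : f y = φ (e.symm y) := rfl
      rw [h0]
      calc ‖φ (e.symm y)‖ ≤ ‖φ‖ * ‖e.symm y‖ := φ.le_opNorm _
        _ = ‖φ‖ * ‖y‖ := by rw [e.symm.norm_map]
        _ ≤ 1 * ‖y‖ := mul_le_mul_of_nonneg_right hφnorm (norm_nonneg _)
    have hg1 : ‖g‖ ≤ 1 := by rw [hg_norm]; exact hf_le
    have hgJ : ∀ x : X, g (J x) = φ x := by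
      intro x
      have hx : (J x) ∈ p := ⟨x, rfl⟩
      have h1 : (⟨J x, hx⟩ : p) = e x := by
        apply Subtype.ext
        simp only [LinearIsometry.equivRange_apply_coe]
        rfl
      have h2 : g (J x) = g ((⟨J x, hx⟩ : p) : Y) := rfl
      rw [h2, hg_ext ⟨J x, hx⟩, h1]
      show φ (e.symm (e x)) = φ x
      rw [e.symm_apply_apply]
    -- the fiber over φ inside the weak-star unit ball of Y*
    have hclosed2 : IsClosed {ψ : WeakDual ℝ Y | ∀ x : X, ψ (J x) = φ x} := by
      have h : {ψ : WeakDual ℝ Y | ∀ x : X, ψ (J x) = φ x}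
          = ⋂ x : X, {ψ : WeakDual ℝ Y | ψ (J x) = φ x} := by
        ext ψ; simp
      rw [h]
      exact isClosed_iInter fun x =>
        isClosed_eq (WeakDual.eval_continuous (J x)) continuous_const
    have hFcomp : IsCompact ((WeakDual.toStrongDual ⁻¹' closedBall 0 1) ∩
        {ψ : WeakDual ℝ Y | ∀ x : X, ψ (J x) = φ x}) :=
      (WeakDual.isCompact_closedBall (𝕜 := ℝ) (0 : StrongDual ℝ Y) 1).inter_right hclosed2
    have hconv2 : Convex ℝ {χ : StrongDual ℝ Y | ∀ x : X, χ (J x) = φ x} := by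
      intro ψ hψ χ hχ a b _ _ hab
      intro x
      show a • ψ (J x) + b • χ (J x) = φ x
      rw [hψ x, hχ x, smul_eq_mul, smul_eq_mul, ← add_mul, hab, one_mul]
    have hFconv : Convex ℝ ((WeakDual.toStrongDual ⁻¹' closedBall 0 1) ∩
        {ψ : WeakDual ℝ Y | ∀ x : X, ψ (J x) = φ x}) :=
      Convex.inter (convex_closedBall (0 : StrongDual ℝ Y) 1) hconv2
    have hFne : ((WeakDual.toStrongDual ⁻¹' closedBall 0 1) ∩
        {ψ : WeakDual ℝ Y | ∀ x : X, ψ (J x) = φ x}).Nonempty := by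
      refine ⟨WeakDual.toStrongDual.symm g, ?_, fun x => hgJ x⟩
      rw [mem_preimage, mem_closedBall_zero_iff]
      exact hg1
    obtain ⟨ψ₀, hψ₀⟩ := hFcomp.extremePoints_nonempty hFne
    rw [mem_extremePoints] at hψ₀
    obtain ⟨⟨hψ₀B, hψ₀J⟩, hψ₀ext⟩ := hψ₀
    have hψ₀comp : (WeakDual.toStrongDual ψ₀).comp J = φ := by
      refine ContinuousLinearMap.ext fun x => ?_
      exact hψ₀J x
    refine ⟨WeakDual.toStrongDual ψ₀, ?_, hψ₀comp⟩
    rw [mem_extremePoints]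
    refine ⟨hψ₀B, ?_⟩
    rintro χ₁ hχ₁ χ₂ hχ₂ ⟨a, b, ha, hb, hab, hsum⟩
    have hχ₁n : ‖χ₁‖ ≤ 1 := by rwa [mem_closedBall_zero_iff] at hχ₁
    have hχ₂n : ‖χ₂‖ ≤ 1 := by rwa [mem_closedBall_zero_iff] at hχ₂
    have hsegφ : a • (χ₁.comp J) + b • (χ₂.comp J) = φ := by
      rw [← hψ₀comp]
      refine ContinuousLinearMap.ext fun x => ?_
      have h := congrArg (fun ξ : StrongDual ℝ Y => ξ (J x)) hsum
      simpa using h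
    obtain ⟨h1, h2⟩ := hφext (χ₁.comp J) (hcompmem χ₁ hχ₁n) (χ₂.comp J) (hcompmem χ₂ hχ₂n)
      ⟨a, b, ha, hb, hab, hsegφ⟩
    have hχ₁F : (WeakDual.toStrongDual.symm χ₁) ∈ ((WeakDual.toStrongDual ⁻¹' closedBall 0 1) ∩
        {ψ : WeakDual ℝ Y | ∀ x : X, ψ (J x) = φ x}) := by
      refine ⟨by rwa [mem_preimage, mem_closedBall_zero_iff], fun x => ?_⟩
      exact congrArg (fun ξ : StrongDual ℝ X => ξ x) h1
    have hχ₂F : (WeakDual.toStrongDual.symm χ₂) ∈ ((WeakDual.toStrongDual ⁻¹' closedBall 0 1) ∩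
        {ψ : WeakDual ℝ Y | ∀ x : X, ψ (J x) = φ x}) := by
      refine ⟨by rwa [mem_preimage, mem_closedBall_zero_iff], fun x => ?_⟩
      exact congrArg (fun ξ : StrongDual ℝ X => ξ x) h2
    have hseg0 : ψ₀ ∈ openSegment ℝ (WeakDual.toStrongDual.symm χ₁)
        (WeakDual.toStrongDual.symm χ₂) := ⟨a, b, ha, hb, hab, hsum⟩
    obtain ⟨e1, e2⟩ := hψ₀ext _ hχ₁F _ hχ₂F hseg0
    exact ⟨congrArg WeakDual.toStrongDual e1, congrArg WeakDual.toStrongDual e2⟩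
  · -- backward direction
    intro hsub x
    refine le_antisymm ?_ ?_
    · calc ‖J x‖ ≤ ‖J‖ * ‖x‖ := J.le_opNorm x
        _ ≤ 1 * ‖x‖ := mul_le_mul_of_nonneg_right hJ (norm_nonneg x)
        _ = ‖x‖ := one_mul _
    · rcases eq_or_ne x 0 with rfl | hx
      · simp
      -- weak-star image of the unit ball of Y* under the adjoint
      have hTw_cont : Continuous (fun ψ : WeakDual ℝ Y =>
          WeakDual.toStrongDual.symm ((WeakDual.toStrongDual ψ).comp J)) :=
        WeakDual.continuous_of_continuous_eval fun z => WeakDual.eval_continuous (J z)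
      have hKcomp : IsCompact ((fun ψ : WeakDual ℝ Y =>
          WeakDual.toStrongDual.symm ((WeakDual.toStrongDual ψ).comp J)) ''
            (WeakDual.toStrongDual ⁻¹' closedBall 0 1)) :=
        (WeakDual.isCompact_closedBall (𝕜 := ℝ) (0 : StrongDual ℝ Y) 1).image hTw_cont
      have hKclosed : IsClosed ((fun ψ : WeakDual ℝ Y =>
          WeakDual.toStrongDual.symm ((WeakDual.toStrongDual ψ).comp J)) ''
            (WeakDual.toStrongDual ⁻¹' closedBall 0 1)) := hKcomp.isClosed
      have hKconv : Convex ℝ ((fun ψ : WeakDual ℝ Y =>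
          WeakDual.toStrongDual.symm ((WeakDual.toStrongDual ψ).comp J)) ''
            (WeakDual.toStrongDual ⁻¹' closedBall 0 1)) := by
        rintro _ ⟨ψ, hψ, rfl⟩ _ ⟨χ, hχ, rfl⟩ a b ha hb hab
        refine ⟨a • ψ + b • χ, ?_, ?_⟩
        · have hψn : ‖WeakDual.toStrongDual ψ‖ ≤ 1 := by
            rwa [mem_preimage, mem_closedBall_zero_iff] at hψ
          have hχn : ‖WeakDual.toStrongDual χ‖ ≤ 1 := by
            rwa [mem_preimage, mem_closedBall_zero_iff] at hχ
          rw [mem_preimage, mem_closedBall_zero_iff]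
          show ‖a • WeakDual.toStrongDual ψ + b • WeakDual.toStrongDual χ‖ ≤ 1
          calc ‖a • WeakDual.toStrongDual ψ + b • WeakDual.toStrongDual χ‖
              ≤ ‖a • WeakDual.toStrongDual ψ‖ + ‖b • WeakDual.toStrongDual χ‖ :=
                norm_add_le _ _
            _ = |a| * ‖WeakDual.toStrongDual ψ‖ + |b| * ‖WeakDual.toStrongDual χ‖ := by
                rw [norm_smul, norm_smul]; rfl
            _ ≤ a * 1 + b * 1 := by
                rw [abs_of_nonneg ha, abs_of_nonneg hb]
                gcongr
            _ = 1 := by rw [mul_one, mul_one, hab]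
        · show ((a • WeakDual.toStrongDual ψ + b • WeakDual.toStrongDual χ).comp J : StrongDual ℝ X)
              = a • ((WeakDual.toStrongDual ψ).comp J : StrongDual ℝ X)
                + b • ((WeakDual.toStrongDual χ).comp J : StrongDual ℝ X)
          rfl
      -- K contains the extreme points of the X* ball
      have hextK : extremePoints ℝ
          (WeakDual.toStrongDual ⁻¹' closedBall (0 : StrongDual ℝ X) 1 : Set (WeakDual ℝ X)) ⊆
            ((fun ψ : WeakDual ℝ Y =>
              WeakDual.toStrongDual.symm ((WeakDual.toStrongDual ψ).comp J)) ''
                (WeakDual.toStrongDual ⁻¹' closedBall 0 1)) := by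
        intro φ hφ
        have hφ' : WeakDual.toStrongDual φ ∈
            extremePoints ℝ (closedBall (0 : StrongDual ℝ X) 1) := hφ
        obtain ⟨ψ, hψext, hψeq⟩ := hsub hφ'
        refine ⟨WeakDual.toStrongDual.symm ψ, ?_, hψeq⟩
        rw [mem_preimage, mem_closedBall_zero_iff]
        have h := extremePoints_subset hψext
        rwa [mem_closedBall_zero_iff] at h
      -- Krein-Milman: the ball is the closed convex hull of its extreme points
      have hBcomp : IsCompact
          (WeakDual.toStrongDual ⁻¹' closedBall (0 : StrongDual ℝ X) 1 : Set (WeakDual ℝ X)) :=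
        WeakDual.isCompact_closedBall (𝕜 := ℝ) 0 1
      have hBconv : Convex ℝ
          (WeakDual.toStrongDual ⁻¹' closedBall (0 : StrongDual ℝ X) 1 : Set (WeakDual ℝ X)) :=
        convex_closedBall (0 : StrongDual ℝ X) 1
      have hKM := closure_convexHull_extremePoints hBcomp hBconv
      have hBsubK : (WeakDual.toStrongDual ⁻¹' closedBall (0 : StrongDual ℝ X) 1 : Set (WeakDual ℝ X))
          ⊆ ((fun ψ : WeakDual ℝ Y =>
              WeakDual.toStrongDual.symm ((WeakDual.toStrongDual ψ).comp J)) ''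
                (WeakDual.toStrongDual ⁻¹' closedBall 0 1)) := by
        rw [← hKM]
        exact closure_minimal (convexHull_min hextK hKconv) hKclosed
      -- now pick a norming functional for x
      obtain ⟨φ, hφ1, hφx⟩ := exists_dual_vector ℝ x (norm_ne_zero_iff.mpr hx)
      have hφK : (WeakDual.toStrongDual.symm φ) ∈ ((fun ψ : WeakDual ℝ Y =>
          WeakDual.toStrongDual.symm ((WeakDual.toStrongDual ψ).comp J)) ''
            (WeakDual.toStrongDual ⁻¹' closedBall 0 1)) := by
        apply hBsubK
        rw [mem_preimage, mem_closedBall_zero_iff]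
        show ‖φ‖ ≤ 1
        rw [hφ1]
      obtain ⟨ψ, hψB, hψeq⟩ := hφK
      have hψn : ‖WeakDual.toStrongDual ψ‖ ≤ 1 := by
        rwa [mem_preimage, mem_closedBall_zero_iff] at hψB
      have hψeq' : (WeakDual.toStrongDual ψ).comp J = φ := hψeq
      have hval : φ x = (WeakDual.toStrongDual ψ) (J x) :=
        (congrArg (fun ξ : StrongDual ℝ X => ξ x) hψeq').symm
      have hx0 : ‖x‖ = φ x := by rw [hφx]; simp
      rw [hx0, hval]
      calc (WeakDual.toStrongDual ψ) (J x) ≤ ‖(WeakDual.toStrongDual ψ) (J x)‖ := le_abs_self _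
        _ ≤ ‖WeakDual.toStrongDual ψ‖ * ‖J x‖ := (WeakDual.toStrongDual ψ).le_opNorm _
        _ ≤ 1 * ‖J x‖ := mul_le_mul_of_nonneg_right hψn (norm_nonneg _)
        _ = ‖J x‖ := one_mul _
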